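/- Let X be a k-complex on [n] with complete (k−1)-skeleton, d > 0, and E = D_{k−1}(X) − d·I the diagonal matrix of degree deviations. If ‖E δ_{k−2} e_F‖ ≤ f·‖δ_{k−2} e_F‖ for every (k−2)-face F, then ‖E b‖ ≤ k·f·‖b‖ for every b ∈ B^{k−1}(X;R). (The same conclusion holds for any diagonal matrix E.) -/

import Mathlib

/-- Signed incidence number `[F : G]`. -/
def incSign {n : ℕ} (F G : Finset (Fin n)) : ℤ :=
  if G ⊆ F ∧ F.card = G.card + 1 then
    ∑ v ∈ F \ G, (-1 : ℤ) ^ (G.filter (fun x => x < v)).card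
  else 0

namespace Stmt16
open Finset

variable {n : ℕ}

lemma incSign_insert {G : Finset (Fin n)} {v : Fin n} (hv : v ∉ G) :
    incSign (insert v G) G = (-1 : ℤ) ^ (G.filter (fun x => x < v)).card := by
  unfold incSign
  rw [if_pos ⟨subset_insert _ _, card_insert_of_notMem hv⟩]
  have h : insert v G \ G = {v} := by
    ext x; simp only [mem_sdiff, mem_insert, mem_singleton]
    constructor
    · rintro ⟨h1 | h1, h2⟩ <;> tauto
    · rintro rfl; exact ⟨Or.inl rfl, hv⟩
  rw [h, sum_singleton]

lemma incSign_sq {G : Finset (Fin n)} {v : Fin n} (hv : v ∉ G) :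
    incSign (insert v G) G * incSign (insert v G) G = 1 := by
  rw [incSign_insert hv, ← pow_add, ← two_mul, pow_mul]; norm_num

lemma sign_insert {G : Finset (Fin n)} {u v : Fin n} (hu : u ∉ G) (hv : v ∉ G) (huv : u ≠ v) :
    incSign (insert v (insert u G)) (insert u G)
      = (if u < v then -1 else 1) * incSign (insert v G) G := by
  have hv' : v ∉ insert u G := by simp [hv, Ne.symm huv]
  rw [incSign_insert hv', incSign_insert hv, filter_insert]
  by_cases h : u < v
  · rw [if_pos h, if_pos h, card_insert_of_notMem (fun hc => hu (mem_filter.1 hc).1),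
      pow_succ]
    ring
  · rw [if_neg h, if_neg h, one_mul]

lemma cancel_sum {A : Finset (Fin n)} {u w : Fin n} (hu : u ∉ A) (hw : w ∉ A) (huw : u ≠ w) :
    incSign (insert u (insert w A)) (insert w A) * incSign (insert w A) A
      + incSign (insert w (insert u A)) (insert u A) * incSign (insert u A) A = 0 := by
  rw [sign_insert hw hu (Ne.symm huw), sign_insert hu hw huw]
  rcases lt_or_gt_of_ne huw with h | h
  · rw [if_neg (asymm h), if_pos h]; ring
  · rw [if_pos h, if_neg (asymm h)]; ring

lemma cancel_mul {A : Finset (Fin n)} {u v : Fin n} (hu : u ∉ A) (hv : v ∉ A) (huv : u ≠ v) :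
    incSign (insert v (insert u A)) (insert u A) * incSign (insert u (insert v A)) (insert v A)
      = -(incSign (insert u A) A * incSign (insert v A) A) := by
  rw [sign_insert hu hv huv, sign_insert hv hu (Ne.symm huv)]
  rcases lt_or_gt_of_ne huv with h | h
  · rw [if_pos h, if_neg (asymm h)]; ring
  · rw [if_neg (asymm h), if_pos h]; ring

lemma powersetCard_pred {H : Finset (Fin n)} (hH : H.Nonempty) :
    H.powersetCard (H.card - 1) = H.image H.erase := by
  ext F
  simp only [mem_powersetCard, mem_image]
  constructor
  · rintro ⟨hFH, hcard⟩
    have hlt : F.card < H.card := by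
      have := card_pos.2 hH
      omega
    have hne : (H \ F).Nonempty := by
      rw [sdiff_nonempty]
      exact fun hHF => absurd (card_le_card hHF) (not_le.2 hlt)
    obtain ⟨u, hu⟩ := hne
    rw [mem_sdiff] at hu
    refine ⟨u, hu.1, (eq_of_subset_of_card_le ?_ ?_).symm⟩
    · exact fun x hx => mem_erase.2 ⟨fun h => hu.2 (h ▸ hx), hFH hx⟩
    · rw [card_erase_of_mem hu.1, hcard]
  · rintro ⟨u, hu, rfl⟩
    exact ⟨erase_subset _ _, card_erase_of_mem hu⟩

lemma sum_pred {H : Finset (Fin n)} (hH : H.Nonempty) (g : Finset (Fin n) → ℝ) :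
    ∑ F ∈ H.powersetCard (H.card - 1), g F = ∑ u ∈ H, g (H.erase u) := by
  rw [powersetCard_pred hH, sum_image]
  intro x hx y hy hxy
  by_contra hne
  have hx' : x ∈ H.erase y := mem_erase.2 ⟨hne, hx⟩
  rw [← hxy] at hx'
  exact (mem_erase.1 hx').1 rfl


/-- Coboundary operator (degree-free). -/
noncomputable def cob (a : Finset (Fin n) → ℝ) (H : Finset (Fin n)) : ℝ :=
  ∑ F ∈ H.powersetCard (H.card - 1), (incSign H F : ℝ) * a F

/-- Boundary operator. -/
noncomputable def bdry (a : Finset (Fin n) → ℝ) (G : Finset (Fin n)) : ℝ :=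
  ∑ v ∈ Gᶜ, (incSign (insert v G) G : ℝ) * a (insert v G)

lemma incSign_empty : incSign (∅ : Finset (Fin n)) ∅ = 0 := by
  simp [incSign]

lemma cob_eq (a : Finset (Fin n) → ℝ) (H : Finset (Fin n)) :
    cob a H = ∑ u ∈ H, (incSign H (H.erase u) : ℝ) * a (H.erase u) := by
  rcases H.eq_empty_or_nonempty with rfl | hH
  · simp [cob, incSign_empty]
  · exact sum_pred hH _


lemma pair_cancel (a : Finset (Fin n) → ℝ) {A : Finset (Fin n)} {u w : Fin n}
    (hu : u ∉ A) (hw : w ∉ A) (huw : u ≠ w) :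
    (incSign (insert u (insert w A)) (insert w A) : ℝ) * ((incSign (insert w A) A : ℝ) * a A)
      + (incSign (insert w (insert u A)) (insert u A) : ℝ)
        * ((incSign (insert u A) A : ℝ) * a A) = 0 := by
  have := cancel_sum hu hw huw
  have h2 : ((incSign (insert u (insert w A)) (insert w A) * incSign (insert w A) A
      + incSign (insert w (insert u A)) (insert u A) * incSign (insert u A) A : ℤ) : ℝ) = 0 := by
    rw [this]; norm_num
  push_cast at h2
  linear_combination a A * h2

lemma cob_cob (a : Finset (Fin n) → ℝ) (H : Finset (Fin n)) : cob (cob a) H = 0 := by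
  have step : cob (cob a) H = ∑ p ∈ H.sigma (fun u => H.erase u),
      (incSign H (H.erase p.1) : ℝ) *
        ((incSign (H.erase p.1) ((H.erase p.1).erase p.2) : ℝ)
          * a ((H.erase p.1).erase p.2)) := by
    rw [Finset.sum_sigma, cob_eq]
    refine sum_congr rfl fun u hu => ?_
    rw [cob_eq, mul_sum]
  rw [step]
  refine Finset.sum_involution (fun p _ => ⟨p.2, p.1⟩) ?_ ?_ ?_ ?_
  · rintro ⟨u, w⟩ hp
    simp only [mem_sigma, mem_erase] at hp
    obtain ⟨hu, hwu, hw⟩ := hp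
    have huw : u ≠ w := Ne.symm hwu
    have hwu' : w ∈ H.erase u := mem_erase.2 ⟨hwu, hw⟩
    have huw' : u ∈ H.erase w := mem_erase.2 ⟨huw, hu⟩
    have e3 : (H.erase w).erase u = (H.erase u).erase w := erase_right_comm
    have e1 : insert w ((H.erase u).erase w) = H.erase u := insert_erase hwu'
    have e2 : insert u ((H.erase u).erase w) = H.erase w := by
      rw [← e3]; exact insert_erase huw'
    have e4 : insert u (H.erase u) = H := insert_erase hu
    have e5 : insert w (H.erase w) = H := insert_erase hw
    have huA : u ∉ (H.erase u).erase w := fun h => notMem_erase u H (mem_of_mem_erase h)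
    have hwA : w ∉ (H.erase u).erase w := notMem_erase _ _
    have key := pair_cancel a huA hwA huw
    rw [e1, e2, e4, e5] at key
    simpa [e3] using key
  · rintro ⟨u, w⟩ hp h
    simp only [mem_sigma, mem_erase] at hp
    intro hcontra
    exact hp.2.1 (congrArg Sigma.fst hcontra)
  · rintro ⟨u, w⟩ hp
    simp only [mem_sigma, mem_erase] at hp ⊢
    exact ⟨hp.2.2, Ne.symm hp.2.1, hp.1⟩
  · rintro ⟨u, w⟩ hp; rfl


lemma pair_cancel2 (a : Finset (Fin n) → ℝ) {A : Finset (Fin n)} {u v : Fin n}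
    (hu : u ∉ A) (hv : v ∉ A) (huv : u ≠ v) :
    (incSign (insert v (insert u A)) (insert u A) : ℝ)
        * ((incSign (insert v (insert u A)) (insert v A) : ℝ) * a (insert v A))
      + (incSign (insert u A) A : ℝ)
        * ((incSign (insert v A) A : ℝ) * a (insert v A)) = 0 := by
  have h1 := cancel_mul hu hv huv
  rw [Finset.insert_comm u v A] at h1
  have h2 : ((incSign (insert v (insert u A)) (insert u A)
      * incSign (insert v (insert u A)) (insert v A) : ℤ) : ℝ)
      = -((incSign (insert u A) A * incSign (insert v A) A : ℤ) : ℝ) := by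
    rw [h1]; push_cast; ring
  push_cast at h2
  linear_combination a (insert v A) * h2

lemma bdry_cob_add (a : Finset (Fin n) → ℝ) (F : Finset (Fin n)) :
    bdry (cob a) F + cob (bdry a) F = n * a F := by
  have hT1 : bdry (cob a) F
      = (Fᶜ.card : ℝ) * a F
        + ∑ v ∈ Fᶜ, ∑ u ∈ F,
            (incSign (insert v F) F : ℝ)
              * ((incSign (insert v F) (insert v (F.erase u)) : ℝ)
                * a (insert v (F.erase u))) := by
    unfold bdry
    have key : ∀ v ∈ Fᶜ, (incSign (insert v F) F : ℝ) * cob a (insert v F)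
        = a F + ∑ u ∈ F,
            (incSign (insert v F) F : ℝ)
              * ((incSign (insert v F) (insert v (F.erase u)) : ℝ)
                * a (insert v (F.erase u))) := by
      intro v hv
      have hvF : v ∉ F := by simpa using hv
      rw [cob_eq, Finset.sum_insert hvF, erase_insert hvF, mul_add]
      congr 1
      · rw [← mul_assoc, ← Int.cast_mul, incSign_sq hvF]; simp
      · rw [mul_sum]
        refine sum_congr rfl fun u hu => ?_
        have huv : v ≠ u := fun h => hvF (h ▸ hu)
        rw [erase_insert_of_ne huv]
    rw [sum_congr rfl key, sum_add_distrib, sum_const, nsmul_eq_mul]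
  have hT2 : cob (bdry a) F
      = (F.card : ℝ) * a F
        + ∑ u ∈ F, ∑ v ∈ Fᶜ,
            (incSign F (F.erase u) : ℝ)
              * ((incSign (insert v (F.erase u)) (F.erase u) : ℝ)
                * a (insert v (F.erase u))) := by
    rw [cob_eq]
    have key : ∀ u ∈ F, (incSign F (F.erase u) : ℝ) * bdry a (F.erase u)
        = a F + ∑ v ∈ Fᶜ,
            (incSign F (F.erase u) : ℝ)
              * ((incSign (insert v (F.erase u)) (F.erase u) : ℝ)
                * a (insert v (F.erase u))) := by
      intro u hu
      have hins : insert u (F.erase u) = F := insert_erase hu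
      have huc : u ∉ Fᶜ := by simp [hu]
      unfold bdry
      rw [compl_erase, Finset.sum_insert huc, mul_add, mul_sum]
      congr 1
      · rw [hins, ← mul_assoc]
        have h3 : incSign F (F.erase u) * incSign F (F.erase u) = 1 := by
          have h4 := incSign_sq (G := F.erase u) (v := u) (notMem_erase u F)
          rwa [hins] at h4
        rw [← Int.cast_mul, h3]; simp
    rw [sum_congr rfl key, sum_add_distrib, sum_const, nsmul_eq_mul]
  rw [hT1, hT2, Finset.sum_comm (s := Fᶜ)]
  have hzero : ∑ u ∈ F, (∑ v ∈ Fᶜ,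
      (incSign (insert v F) F : ℝ)
        * ((incSign (insert v F) (insert v (F.erase u)) : ℝ) * a (insert v (F.erase u)))
      + ∑ v ∈ Fᶜ,
      (incSign F (F.erase u) : ℝ)
        * ((incSign (insert v (F.erase u)) (F.erase u) : ℝ) * a (insert v (F.erase u)))) = 0 := by
    refine sum_eq_zero fun u hu => ?_
    rw [← sum_add_distrib]
    refine sum_eq_zero fun v hv => ?_
    have hvF : v ∉ F := by simpa using hv
    have hins : insert u (F.erase u) = F := insert_erase hu
    have huA : u ∉ F.erase u := notMem_erase _ _
    have hvA : v ∉ F.erase u := fun h => hvF (mem_of_mem_erase h)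
    have huv : u ≠ v := fun h => hvF (h ▸ hu)
    have key := pair_cancel2 a (A := F.erase u) huA hvA huv
    rw [hins] at key
    exact key
  have hcard : (Fᶜ.card : ℝ) + (F.card : ℝ) = n := by
    have h1 : Fᶜ.card = n - F.card := by
      rw [card_compl, Fintype.card_fin]
    have h2 : F.card ≤ n := by
      simpa using card_le_card (subset_univ F)
    rw [h1]
    push_cast [Nat.cast_sub h2]
    ring
  rw [sum_add_distrib] at hzero
  linear_combination hzero + a F * hcard


lemma sum_pair (m : ℕ) (g : Finset (Fin n) → Fin n → ℝ) :
    ∑ H ∈ (univ : Finset (Fin n)).powersetCard (m + 1), ∑ u ∈ H, g H u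
      = ∑ F ∈ (univ : Finset (Fin n)).powersetCard m, ∑ v ∈ Fᶜ, g (insert v F) v := by
  rw [Finset.sum_sigma', Finset.sum_sigma']
  refine Finset.sum_bij' (fun p _ => (⟨p.1.erase p.2, p.2⟩ : Σ _ : Finset (Fin n), Fin n))
    (fun p _ => (⟨insert p.2 p.1, p.2⟩ : Σ _ : Finset (Fin n), Fin n)) ?_ ?_ ?_ ?_ ?_
  · rintro ⟨H, u⟩ hp
    simp only [mem_sigma, mem_powersetCard, mem_compl] at hp ⊢
    obtain ⟨⟨-, hc⟩, hu⟩ := hp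
    exact ⟨⟨subset_univ _, by rw [card_erase_of_mem hu, hc]; omega⟩, notMem_erase _ _⟩
  · rintro ⟨F, v⟩ hp
    simp only [mem_sigma, mem_powersetCard, mem_compl] at hp ⊢
    obtain ⟨⟨-, hc⟩, hv⟩ := hp
    exact ⟨⟨subset_univ _, by rw [card_insert_of_notMem hv, hc]⟩, mem_insert_self _ _⟩
  · rintro ⟨H, u⟩ hp
    simp only [mem_sigma] at hp
    simp only [Sigma.mk.inj_iff, heq_eq_eq, and_true]
    exact insert_erase hp.2
  · rintro ⟨F, v⟩ hp
    simp only [mem_sigma, mem_compl] at hp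
    simp only [Sigma.mk.inj_iff, heq_eq_eq, and_true]
    exact erase_insert hp.2
  · rintro ⟨H, u⟩ hp
    simp only [mem_sigma] at hp
    simp only []
    rw [insert_erase hp.2]


lemma cob_linear (r : ℝ) (c e : Finset (Fin n) → ℝ) (H : Finset (Fin n)) :
    cob (fun F => r * c F - e F) H = r * cob c H - cob e H := by
  unfold cob
  rw [mul_sum, ← sum_sub_distrib]
  exact sum_congr rfl fun F _ => by ring

lemma incSign_sq_real {G : Finset (Fin n)} {v : Fin n} (hv : v ∉ G) :
    ((incSign (insert v G) G : ℝ))^2 = 1 := by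
  have h1 := incSign_sq hv
  have h2 : ((incSign (insert v G) G * incSign (insert v G) G : ℤ) : ℝ) = 1 := by
    rw [h1]; norm_num
  push_cast at h2
  rw [sq]; exact h2

end Stmt16

open Finset Stmt16

/-- Let `X` be a `k`-complex on `[n]` with complete `(k−1)`-skeleton (with set `K` of
`k`-faces) and `E = D_{k−1} − d·I` the diagonal matrix of degree deviations. If
`‖E δ_{k−2} e_F‖ ≤ f·‖δ_{k−2} e_F‖` for every `(k−2)`-face `F` (note
`‖Eδe_F‖² = Σ_{v∉F}(deg(F∪{v})−d)²` and `‖δe_F‖ = √(n−k+1)`), then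
`‖E b‖ ≤ k·f·‖b‖` for every coboundary `b ∈ B^{k−1}(X;ℝ)`. -/
theorem stmt16 (n k : ℕ) (hk : 1 ≤ k) (hkn : k ≤ n)
    (K : Finset (Finset (Fin n))) (hK : ∀ H ∈ K, H.card = k + 1)
    (deg : Finset (Fin n) → ℕ) (hdeg : ∀ H, deg H = (K.filter (fun H' => H ⊆ H')).card)
    (d : ℝ) (hd : 0 < d) (f : ℝ)
    (hlinks : ∀ F : Finset (Fin n), F.card = k - 1 →
      Real.sqrt (∑ v ∈ Fᶜ, ((deg (insert v F) : ℝ) - d) ^ 2)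
        ≤ f * Real.sqrt ((n : ℝ) - k + 1))
    (b : Finset (Fin n) → ℝ)
    (hb : ∃ c : Finset (Fin n) → ℝ, ∀ H : Finset (Fin n), H.card = k →
      b H = ∑ F ∈ H.powersetCard (k - 1), (incSign H F : ℝ) * c F) :
    Real.sqrt (∑ H ∈ (Finset.univ : Finset (Fin n)).powersetCard k,
        (((deg H : ℝ) - d) * b H) ^ 2)
      ≤ (k : ℝ) * f *
        Real.sqrt (∑ H ∈ (Finset.univ : Finset (Fin n)).powersetCard k, b H ^ 2) := by
  classical
  obtain ⟨c, hc⟩ := hb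
  have hk1 : k - 1 + 1 = k := by omega
  have hknR : (k : ℝ) ≤ n := by exact_mod_cast hkn
  have hkR : (1 : ℝ) ≤ k := by exact_mod_cast hk
  have hnk : (0 : ℝ) ≤ (n : ℝ) - k + 1 := by linarith
  have hnpos : (0 : ℝ) < n := by linarith
  set P : Finset (Finset (Fin n)) := (Finset.univ : Finset (Fin n)).powersetCard k with hP
  set Q : Finset (Finset (Fin n)) := (Finset.univ : Finset (Fin n)).powersetCard (k - 1) with hQ
  -- b agrees with cob c on P
  have hbc : ∀ H ∈ P, b H = cob c H := by
    intro H hH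
    rw [hP, mem_powersetCard] at hH
    rw [hc H hH.2]
    unfold cob
    rw [hH.2]
  -- f is nonnegative
  have f0 : 0 ≤ f := by
    obtain ⟨F₀, -, hF₀⟩ := Finset.exists_subset_card_eq
      (show k - 1 ≤ (Finset.univ : Finset (Fin n)).card by rw [card_univ, Fintype.card_fin]; omega)
    have h0 := hlinks F₀ hF₀
    have hs : 0 < Real.sqrt ((n : ℝ) - k + 1) := Real.sqrt_pos.2 (by linarith)
    have h1 := le_trans (Real.sqrt_nonneg _) h0
    nlinarith
  -- squared link bound
  have hlink2 : ∀ F : Finset (Fin n), F.card = k - 1 →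
      ∑ v ∈ Fᶜ, ((deg (insert v F) : ℝ) - d) ^ 2 ≤ f ^ 2 * ((n : ℝ) - k + 1) := by
    intro F hF
    have h0 := hlinks F hF
    have hs0 : (0 : ℝ) ≤ ∑ v ∈ Fᶜ, ((deg (insert v F) : ℝ) - d) ^ 2 :=
      sum_nonneg fun _ _ => sq_nonneg _
    calc ∑ v ∈ Fᶜ, ((deg (insert v F) : ℝ) - d) ^ 2
        = (Real.sqrt (∑ v ∈ Fᶜ, ((deg (insert v F) : ℝ) - d) ^ 2)) ^ 2 :=
          (Real.sq_sqrt hs0).symm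
      _ ≤ (f * Real.sqrt ((n : ℝ) - k + 1)) ^ 2 :=
          pow_le_pow_left₀ (Real.sqrt_nonneg _) h0 2
      _ = f ^ 2 * ((n : ℝ) - k + 1) := by rw [mul_pow, Real.sq_sqrt hnk]
  -- the harmonic representative
  set h : Finset (Fin n) → ℝ := bdry (cob c) with hh
  have key3 : ∀ H : Finset (Fin n), cob h H = n * cob c H := by
    intro H
    have hfun : h = fun F => (n : ℝ) * c F - cob (bdry c) F := by
      funext F
      rw [hh]
      have h2 := bdry_cob_add (a := c) (F := F)
      linarith
    rw [hfun, cob_linear, cob_cob]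
    ring
  -- Cauchy-Schwarz per k-face
  have hstep : ∀ H ∈ P, ((n : ℝ) * cob c H) ^ 2 ≤ (k : ℝ) * ∑ u ∈ H, (h (H.erase u)) ^ 2 := by
    intro H hH
    have hcard : H.card = k := (mem_powersetCard.1 hH).2
    rw [← key3 H, cob_eq]
    calc (∑ u ∈ H, (incSign H (H.erase u) : ℝ) * h (H.erase u)) ^ 2
        ≤ (∑ u ∈ H, ((incSign H (H.erase u) : ℝ)) ^ 2) * ∑ u ∈ H, (h (H.erase u)) ^ 2 :=
          sum_mul_sq_le_sq_mul_sq _ _ _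
      _ = (k : ℝ) * ∑ u ∈ H, (h (H.erase u)) ^ 2 := by
          have hs : ∀ u ∈ H, ((incSign H (H.erase u) : ℝ)) ^ 2 = 1 := by
            intro u hu
            have h1 := incSign_sq_real (G := H.erase u) (v := u) (notMem_erase u H)
            rwa [insert_erase hu] at h1
          rw [sum_congr rfl hs, sum_const, hcard, nsmul_eq_mul, mul_one]
  -- Cauchy-Schwarz per (k-1)-face
  have hstep2 : ∀ F ∈ Q, (h F) ^ 2 ≤ ((n : ℝ) - k + 1) * ∑ v ∈ Fᶜ, (cob c (insert v F)) ^ 2 := by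
    intro F hF
    have hcard : F.card = k - 1 := (mem_powersetCard.1 hF).2
    have hcardc : ((Fᶜ.card : ℕ) : ℝ) = (n : ℝ) - k + 1 := by
      rw [card_compl, Fintype.card_fin, hcard]
      have h1 : k - 1 ≤ n := by omega
      rw [Nat.cast_sub h1, Nat.cast_sub hk]
      push_cast
      ring
    rw [hh]
    unfold bdry
    calc (∑ v ∈ Fᶜ, (incSign (insert v F) F : ℝ) * cob c (insert v F)) ^ 2
        ≤ (∑ v ∈ Fᶜ, ((incSign (insert v F) F : ℝ)) ^ 2)
            * ∑ v ∈ Fᶜ, (cob c (insert v F)) ^ 2 := sum_mul_sq_le_sq_mul_sq _ _ _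
      _ = ((n : ℝ) - k + 1) * ∑ v ∈ Fᶜ, (cob c (insert v F)) ^ 2 := by
          have hs : ∀ v ∈ Fᶜ, ((incSign (insert v F) F : ℝ)) ^ 2 = 1 := by
            intro v hv
            exact incSign_sq_real (by simpa using hv)
          rw [sum_congr rfl hs, sum_const, nsmul_eq_mul, mul_one, hcardc]
  -- abbreviations
  set S2 : ℝ := ∑ H ∈ P, (cob c H) ^ 2 with hS2
  have hS2nn : 0 ≤ S2 := sum_nonneg fun _ _ => sq_nonneg _
  -- reindexing identities
  have swap1 := sum_pair (n := n) (k - 1)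
    (fun H u => ((deg H : ℝ) - d) ^ 2 * (h (H.erase u)) ^ 2)
  have swap2 := sum_pair (n := n) (k - 1) (fun H _ => (cob c H) ^ 2)
  rw [hk1] at swap1 swap2
  -- sum over Q of h² is bounded by k (n-k+1) S2
  have hhsum : ∑ F ∈ Q, (h F) ^ 2 ≤ ((n : ℝ) - k + 1) * ((k : ℝ) * S2) := by
    have e1 : ∑ F ∈ Q, ∑ v ∈ Fᶜ, (cob c (insert v F)) ^ 2 = (k : ℝ) * S2 := by
      rw [← swap2, hS2, hP, mul_sum]
      refine sum_congr rfl fun H hH => ?_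
      rw [sum_const, (mem_powersetCard.1 hH).2, nsmul_eq_mul]
    calc ∑ F ∈ Q, (h F) ^ 2
        ≤ ∑ F ∈ Q, ((n : ℝ) - k + 1) * ∑ v ∈ Fᶜ, (cob c (insert v F)) ^ 2 :=
          sum_le_sum hstep2
      _ = ((n : ℝ) - k + 1) * ((k : ℝ) * S2) := by rw [← mul_sum, e1]
  -- main squared estimate
  have main : (n : ℝ) ^ 2 * ∑ H ∈ P, ((deg H : ℝ) - d) ^ 2 * (cob c H) ^ 2
      ≤ (k : ℝ) ^ 2 * f ^ 2 * ((n : ℝ) - k + 1) ^ 2 * S2 := by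
    calc (n : ℝ) ^ 2 * ∑ H ∈ P, ((deg H : ℝ) - d) ^ 2 * (cob c H) ^ 2
        = ∑ H ∈ P, ((deg H : ℝ) - d) ^ 2 * ((n : ℝ) * cob c H) ^ 2 := by
          rw [mul_sum]; exact sum_congr rfl fun H _ => by ring
      _ ≤ ∑ H ∈ P, ((deg H : ℝ) - d) ^ 2 * ((k : ℝ) * ∑ u ∈ H, (h (H.erase u)) ^ 2) :=
          sum_le_sum fun H hH => mul_le_mul_of_nonneg_left (hstep H hH) (sq_nonneg _)
      _ = (k : ℝ) * ∑ H ∈ P, ∑ u ∈ H, ((deg H : ℝ) - d) ^ 2 * (h (H.erase u)) ^ 2 := by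
          rw [mul_sum]
          refine sum_congr rfl fun H _ => ?_
          simp only [mul_sum]
          exact sum_congr rfl fun u _ => by ring
      _ = (k : ℝ) * ∑ F ∈ Q, ∑ v ∈ Fᶜ,
            ((deg (insert v F) : ℝ) - d) ^ 2 * (h ((insert v F).erase v)) ^ 2 := by
          rw [swap1]
      _ = (k : ℝ) * ∑ F ∈ Q, (∑ v ∈ Fᶜ, ((deg (insert v F) : ℝ) - d) ^ 2) * (h F) ^ 2 := by
          congr 1
          refine sum_congr rfl fun F hF => ?_
          rw [sum_mul]
          refine sum_congr rfl fun v hv => ?_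
          rw [erase_insert (by simpa using hv)]
      _ ≤ (k : ℝ) * ∑ F ∈ Q, (f ^ 2 * ((n : ℝ) - k + 1)) * (h F) ^ 2 := by
          refine mul_le_mul_of_nonneg_left (sum_le_sum fun F hF => ?_) (by positivity)
          exact mul_le_mul_of_nonneg_right
            (hlink2 F (mem_powersetCard.1 hF).2) (sq_nonneg _)
      _ = (k : ℝ) * (f ^ 2 * ((n : ℝ) - k + 1)) * ∑ F ∈ Q, (h F) ^ 2 := by
          rw [← mul_sum]; ring
      _ ≤ (k : ℝ) * (f ^ 2 * ((n : ℝ) - k + 1)) * (((n : ℝ) - k + 1) * ((k : ℝ) * S2)) := by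
          refine mul_le_mul_of_nonneg_left hhsum (by positivity)
      _ = (k : ℝ) ^ 2 * f ^ 2 * ((n : ℝ) - k + 1) ^ 2 * S2 := by ring
  -- divide through
  have hA : ∑ H ∈ P, ((deg H : ℝ) - d) ^ 2 * (cob c H) ^ 2 ≤ ((k : ℝ) * f) ^ 2 * S2 := by
    have h4 : (n : ℝ) - k + 1 ≤ n := by linarith
    have h5 : ((n : ℝ) - k + 1) ^ 2 ≤ (n : ℝ) ^ 2 := by nlinarith [h4, hnk]
    have h6 : (k : ℝ) ^ 2 * f ^ 2 * ((n : ℝ) - k + 1) ^ 2 * S2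
        ≤ (k : ℝ) ^ 2 * f ^ 2 * (n : ℝ) ^ 2 * S2 :=
      mul_le_mul_of_nonneg_right
        (mul_le_mul_of_nonneg_left h5 (by positivity : (0:ℝ) ≤ (k : ℝ) ^ 2 * f ^ 2)) hS2nn
    have h7 : (n : ℝ) ^ 2 * (∑ H ∈ P, ((deg H : ℝ) - d) ^ 2 * (cob c H) ^ 2)
        ≤ (n : ℝ) ^ 2 * (((k : ℝ) * f) ^ 2 * S2) := by
      have : (k : ℝ) ^ 2 * f ^ 2 * (n : ℝ) ^ 2 * S2
          = (n : ℝ) ^ 2 * (((k : ℝ) * f) ^ 2 * S2) := by ring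
      linarith [main, h6]
    exact le_of_mul_le_mul_left h7 (by positivity)
  -- convert goal
  have eg1 : ∑ H ∈ P, (((deg H : ℝ) - d) * b H) ^ 2
      = ∑ H ∈ P, ((deg H : ℝ) - d) ^ 2 * (cob c H) ^ 2 := by
    refine sum_congr rfl fun H hH => ?_
    rw [hbc H hH, mul_pow]
  have eg2 : ∑ H ∈ P, b H ^ 2 = S2 := by
    refine sum_congr rfl fun H hH => ?_
    rw [hbc H hH]
  rw [eg1, eg2]
  calc Real.sqrt (∑ H ∈ P, ((deg H : ℝ) - d) ^ 2 * (cob c H) ^ 2)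
      ≤ Real.sqrt (((k : ℝ) * f) ^ 2 * S2) := Real.sqrt_le_sqrt hA
    _ = (k : ℝ) * f * Real.sqrt S2 := by
        rw [Real.sqrt_mul (sq_nonneg _), Real.sqrt_sq (by positivity)]
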